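/- Jacobian suboptimality rate for the Chebyshev method (Theorem 3.5): Under the stated setting with residual polynomial P = Cₜ (the shifted, normalized Chebyshev polynomial) and integer t ≥ 1, writing κ = ℓ/L and ξ = (1-√κ)/(1+√κ), one has ‖deriv xₜ θ - deriv x⋆ θ‖ ≤ (2/(ξ^t + ξ^(-t))) · (|2t²/(1-κ) - 1| · ‖deriv x₀ θ - deriv x⋆ θ‖ + (2t²/(L-ℓ))·G). -/

import Mathlib

open Polynomial Matrix

attribute [local instance] Matrix.normedAddCommGroup Matrix.normedSpace

/-- The Euclidean norm on `Fin d → ℝ`. -/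
noncomputable def euclNorm {d : ℕ} (v : Fin d → ℝ) : ℝ := Real.sqrt (∑ i, v i ^ 2)

namespace JRC
variable {d : ℕ}


lemma abs_sin_nat_mul_le (n : ℕ) (φ : ℝ) : |Real.sin (n * φ)| ≤ n * |Real.sin φ| := by
  induction n with
  | zero => simp
  | succ k ih =>
    have h1 : ((k+1 : ℕ):ℝ) * φ = k * φ + φ := by push_cast; ring
    rw [h1, Real.sin_add]
    calc |Real.sin (k*φ) * Real.cos φ + Real.cos (k*φ) * Real.sin φ|
        ≤ |Real.sin (k*φ) * Real.cos φ| + |Real.cos (k*φ) * Real.sin φ| := abs_add_le _ _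
      _ ≤ |Real.sin (k*φ)| * 1 + 1 * |Real.sin φ| := by
          rw [abs_mul, abs_mul]
          gcongr <;> first | exact Real.abs_cos_le_one _ | exact abs_nonneg _
      _ ≤ k * |Real.sin φ| + 1 * |Real.sin φ| := by simpa using ih
      _ = (k+1 : ℕ) * |Real.sin φ| := by push_cast; ring

lemma U_eval_one (n : ℕ) : (Chebyshev.U ℝ (n:ℤ)).eval 1 = n + 1 := by
  induction n using Nat.twoStepInduction with
  | zero => simp [Chebyshev.U_zero]
  | one => simp [Chebyshev.U_one]; norm_num
  | more k ih1 ih2 =>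
    have h : ((k+2:ℕ):ℤ) = (k:ℤ) + 2 := by push_cast; ring
    rw [h, Chebyshev.U_add_two]
    have h1 : ((k+1:ℕ):ℤ) = (k:ℤ) + 1 := by push_cast; ring
    rw [h1] at ih2
    simp only [eval_sub, eval_mul, eval_ofNat, eval_X, ih1, ih2]
    push_cast; ring

lemma U_eval_neg_one (n : ℕ) : (Chebyshev.U ℝ (n:ℤ)).eval (-1) = (-1:ℝ)^n * (n + 1) := by
  induction n using Nat.twoStepInduction with
  | zero => simp [Chebyshev.U_zero]
  | one => simp [Chebyshev.U_one]; ring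
  | more k ih1 ih2 =>
    have h : ((k+2:ℕ):ℤ) = (k:ℤ) + 2 := by push_cast; ring
    rw [h, Chebyshev.U_add_two]
    have h1 : ((k+1:ℕ):ℤ) = (k:ℤ) + 1 := by push_cast; ring
    rw [h1] at ih2
    simp only [eval_sub, eval_mul, eval_ofNat, eval_X, ih1, ih2]
    push_cast; ring

lemma U_eval_abs_le (n : ℕ) {u : ℝ} (hu : u ∈ Set.Icc (-1:ℝ) 1) :
    |(Chebyshev.U ℝ (n:ℤ)).eval u| ≤ n + 1 := by
  obtain ⟨h1, h2⟩ := hu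
  have hcos : Real.cos (Real.arccos u) = u := Real.cos_arccos h1 h2
  set φ := Real.arccos u with hφ
  by_cases hs : Real.sin φ = 0
  · -- endpoints
    have : u = 1 ∨ u = -1 := by
      have := Real.sin_arccos u
      rw [← hφ, hs] at this
      have h0 : Real.sqrt (1 - u^2) = 0 := this.symm
      have := (Real.sqrt_eq_zero (by nlinarith)).mp h0
      rcases le_or_gt u 0 with h | h
      · right; nlinarith
      · left; nlinarith
    rcases this with h | h
    · rw [h, U_eval_one]; rw [abs_of_nonneg (by positivity)]
    · rw [h, U_eval_neg_one, abs_mul, abs_pow, abs_neg, abs_one, one_pow, one_mul,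
        abs_of_nonneg (by positivity)]
  · have key := Chebyshev.U_real_cos φ (n:ℤ)
    rw [hcos] at key
    have : (Chebyshev.U ℝ (n:ℤ)).eval u = Real.sin (((n:ℝ)+1) * φ) / Real.sin φ := by
      field_simp
      rw [key]; norm_num
    rw [this, abs_div]
    rw [div_le_iff₀ (by positivity : (0:ℝ) < |Real.sin φ|)]
    have := abs_sin_nat_mul_le (n+1) φ
    push_cast at this ⊢
    linarith

lemma T_eval_abs_le (n : ℤ) {u : ℝ} (hu : u ∈ Set.Icc (-1:ℝ) 1) :
    |(Chebyshev.T ℝ n).eval u| ≤ 1 := by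
  obtain ⟨h1, h2⟩ := hu
  have hcos : Real.cos (Real.arccos u) = u := Real.cos_arccos h1 h2
  have := Chebyshev.T_real_cos (Real.arccos u) n
  rw [hcos] at this
  rw [this]
  exact Real.abs_cos_le_one _

lemma T_eval_half_add (y : ℝ) (hy : y ≠ 0) (n : ℕ) :
    (Chebyshev.T ℝ (n:ℤ)).eval ((y + y⁻¹)/2) = (y^n + y⁻¹^n)/2 := by
  induction n using Nat.twoStepInduction with
  | zero => simp [Chebyshev.T_zero]
  | one => simp [Chebyshev.T_one]
  | more k ih1 ih2 =>
    have h : ((k+2:ℕ):ℤ) = (k:ℤ) + 2 := by push_cast; ring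
    rw [h, Chebyshev.T_add_two]
    have h1 : ((k+1:ℕ):ℤ) = (k:ℤ) + 1 := by push_cast; ring
    rw [h1] at ih2
    simp only [eval_sub, eval_mul, eval_ofNat, eval_X, ih1, ih2]
    simp only [inv_pow]
    field_simp
    ring


variable {d : ℕ}

lemma euclNorm_eq_norm (v : Fin d → ℝ) :
    euclNorm v = ‖(WithLp.equiv 2 (Fin d → ℝ)).symm v‖ := by
  rw [EuclideanSpace.norm_eq, euclNorm]
  congr 1
  refine Finset.sum_congr rfl fun i _ => ?_
  rw [Real.norm_eq_abs, sq_abs]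
  rfl

lemma euclNorm_add_le (v w : Fin d → ℝ) : euclNorm (v + w) ≤ euclNorm v + euclNorm w := by
  simp only [euclNorm_eq_norm]
  exact norm_add_le _ _




lemma euclNorm_sq (v : Fin d → ℝ) : euclNorm v ^ 2 = v ⬝ᵥ v := by
  rw [euclNorm, Real.sq_sqrt]
  · simp [dotProduct, pow_two]
  · positivity

lemma euclNorm_nonneg (v : Fin d → ℝ) : 0 ≤ euclNorm v := Real.sqrt_nonneg _

lemma euclNorm_mulVec_unitary {W : Matrix (Fin d) (Fin d) ℝ} (hW : Wᵀ * W = 1)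
    (x : Fin d → ℝ) : euclNorm (W *ᵥ x) = euclNorm x := by
  have h : (W *ᵥ x) ⬝ᵥ (W *ᵥ x) = x ⬝ᵥ x := by
    rw [dotProduct_mulVec, ← Matrix.mulVec_transpose, mulVec_mulVec, hW, one_mulVec,
      dotProduct_comm]
  have h1 := euclNorm_sq (W *ᵥ x)
  have h2 := euclNorm_sq x
  have h3 : euclNorm (W *ᵥ x) ^ 2 = euclNorm x ^ 2 := h1.trans (h.trans h2.symm)
  nlinarith [euclNorm_nonneg (W *ᵥ x), euclNorm_nonneg x]

lemma euclNorm_mulVec_diagonal {w : Fin d → ℝ} {M : ℝ} (hM : 0 ≤ M) (h : ∀ i, |w i| ≤ M)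
    (x : Fin d → ℝ) : euclNorm ((diagonal w) *ᵥ x) ≤ M * euclNorm x := by
  rw [euclNorm, euclNorm, ← Real.sqrt_sq hM, ← Real.sqrt_mul (by positivity)]
  apply Real.sqrt_le_sqrt
  rw [Finset.mul_sum]
  apply Finset.sum_le_sum
  intro i _
  rw [mulVec_diagonal]
  have := h i
  have : (w i)^2 ≤ M^2 := by nlinarith [abs_nonneg (w i), sq_abs (w i)]
  nlinarith [sq_nonneg (x i)]

lemma aeval_conj (U D : Matrix (Fin d) (Fin d) ℝ) (hU : U * Uᵀ = 1) (hU' : Uᵀ * U = 1)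
    (R : ℝ[X]) : aeval (U * D * Uᵀ) R = U * (aeval D R) * Uᵀ := by
  induction R using Polynomial.induction_on' with
  | add p q hp hq => simp [map_add, hp, hq, Matrix.mul_add, Matrix.add_mul]
  | monomial n a =>
    simp only [aeval_monomial]
    have hpow : ∀ m : ℕ, (U * D * Uᵀ) ^ m = U * D ^ m * Uᵀ := by
      intro m
      induction m with
      | zero => simp [hU]
      | succ k ih =>
        rw [pow_succ, pow_succ, ih]
        calc U * D ^ k * Uᵀ * (U * D * Uᵀ) = U * D ^ k * (Uᵀ * U) * D * Uᵀ := by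
              simp only [Matrix.mul_assoc]
          _ = U * (D ^ k * D) * Uᵀ := by rw [hU']; simp only [Matrix.mul_one, Matrix.mul_assoc]
    rw [hpow]
    have halg : (algebraMap ℝ (Matrix (Fin d) (Fin d) ℝ)) a = a • (1 : Matrix (Fin d) (Fin d) ℝ) := by
      simp [Algebra.algebraMap_eq_smul_one]
    rw [halg, smul_one_mul, smul_one_mul, Matrix.mul_smul, Matrix.smul_mul]

lemma aeval_diagonal' (w : Fin d → ℝ) (R : ℝ[X]) :
    aeval (diagonal w) R = diagonal (fun i => R.eval (w i)) := by
  have h := Polynomial.aeval_algHom_apply (Matrix.diagonalAlgHom (n := Fin d) (α := ℝ) ℝ) w R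
  rw [Matrix.diagonalAlgHom_apply] at h
  have hw : (aeval w) R = fun i => eval (w i) R := by
    funext i
    have h2 := Polynomial.aeval_algHom_apply (Pi.evalAlgHom ℝ (fun _ : Fin d => ℝ) i) w R
    simpa [Polynomial.coe_aeval_eq_eval] using h2.symm
  rw [h, Matrix.diagonalAlgHom_apply, hw]

lemma opBound (hd : 1 ≤ d) {A : Matrix (Fin d) (Fin d) ℝ} (hA : A.IsHermitian)
    (R : ℝ[X]) {M : ℝ} (hM : ∀ i, |R.eval (hA.eigenvalues i)| ≤ M) (v : Fin d → ℝ) :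
    euclNorm ((aeval A R) *ᵥ v) ≤ M * euclNorm v := by
  have hM0 : 0 ≤ M := le_trans (abs_nonneg _) (hM ⟨0, hd⟩)
  set U : Matrix (Fin d) (Fin d) ℝ := (Matrix.IsHermitian.eigenvectorUnitary hA : Matrix (Fin d) (Fin d) ℝ) with hUdef
  have hU1 : star U * U = 1 := (Unitary.mem_iff.mp (Matrix.IsHermitian.eigenvectorUnitary hA).2).1
  have hU2 : U * star U = 1 := (Unitary.mem_iff.mp (Matrix.IsHermitian.eigenvectorUnitary hA).2).2
  have hstar : star U = Uᵀ := by
    rw [Matrix.star_eq_conjTranspose, Matrix.conjTranspose_eq_transpose_of_trivial]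
  rw [hstar] at hU1 hU2
  have hspec : A = U * diagonal (hA.eigenvalues) * Uᵀ := by
    have := hA.spectral_theorem
    rw [Unitary.conjStarAlgAut_apply] at this
    rw [← hstar]
    convert this using 3 <;> rfl
  have haeval : aeval A R = U * diagonal (fun i => R.eval (hA.eigenvalues i)) * Uᵀ := by
    have h5 := aeval_conj U (diagonal hA.eigenvalues) hU2 hU1 R
    rw [← hspec, aeval_diagonal'] at h5
    exact h5
  rw [haeval, ← Matrix.mulVec_mulVec, ← Matrix.mulVec_mulVec,
    euclNorm_mulVec_unitary hU1]
  calc euclNorm (diagonal (fun i => R.eval (hA.eigenvalues i)) *ᵥ (Uᵀ *ᵥ v))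
      ≤ M * euclNorm (Uᵀ *ᵥ v) := euclNorm_mulVec_diagonal hM0 hM _
    _ = M * euclNorm v := by
        rw [euclNorm_mulVec_unitary (by rw [Matrix.transpose_transpose]; exact hU2) v]




lemma hasDerivAt_matrix {F : ℝ → Matrix (Fin d) (Fin d) ℝ} {A : Matrix (Fin d) (Fin d) ℝ}
    {x : ℝ} : HasDerivAt F A x ↔ ∀ i j, HasDerivAt (fun y => F y i j) (A i j) x := by
  exact hasDerivAt_pi.trans (forall_congr' fun i => hasDerivAt_pi)

lemma hasDerivAt_matmul {F G : ℝ → Matrix (Fin d) (Fin d) ℝ}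
    {A B : Matrix (Fin d) (Fin d) ℝ} {x : ℝ}
    (hF : HasDerivAt F A x) (hG : HasDerivAt G B x) :
    HasDerivAt (fun y => F y * G y) (A * G x + F x * B) x := by
  rw [hasDerivAt_matrix] at hF hG ⊢
  intro i j
  have key : ∀ k, HasDerivAt (fun y => F y i k * G y k j)
      (A i k * G x k j + F x i k * B k j) x := fun k => (hF i k).mul (hG k j)
  have := HasDerivAt.fun_sum (u := Finset.univ) (fun k _ => key k)
  simpa [Matrix.mul_apply, Matrix.add_apply, Finset.sum_add_distrib] using this

lemma hasDerivAt_mulVec {F : ℝ → Matrix (Fin d) (Fin d) ℝ} {g : ℝ → (Fin d → ℝ)}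
    {A : Matrix (Fin d) (Fin d) ℝ} {w : Fin d → ℝ} {x : ℝ}
    (hF : HasDerivAt F A x) (hg : HasDerivAt g w x) :
    HasDerivAt (fun y => (F y) *ᵥ (g y)) (A *ᵥ (g x) + (F x) *ᵥ w) x := by
  rw [hasDerivAt_matrix] at hF
  rw [hasDerivAt_pi] at hg ⊢
  intro i
  have key : ∀ k, HasDerivAt (fun y => F y i k * g y k)
      (A i k * g x k + F x i k * w k) x := fun k => (hF i k).mul (hg k)
  have := HasDerivAt.fun_sum (u := Finset.univ) (fun k _ => key k)
  simpa [Matrix.mulVec, dotProduct, Finset.sum_add_distrib] using this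

lemma hasDerivAt_pow_matrix {F : ℝ → Matrix (Fin d) (Fin d) ℝ}
    {A : Matrix (Fin d) (Fin d) ℝ} {x : ℝ}
    (hF : HasDerivAt F A x) (hcomm : F x * A = A * F x) (n : ℕ) :
    HasDerivAt (fun y => F y ^ n) ((n : ℝ) • (F x ^ (n - 1) * A)) x := by
  induction n with
  | zero => simp only [pow_zero, Nat.cast_zero, zero_smul]; exact hasDerivAt_const x _
  | succ k ih =>
    have hcp : ∀ m : ℕ, F x ^ m * A = A * F x ^ m := fun m =>
      (Commute.pow_left (hcomm) m)
    have h1 : HasDerivAt (fun y => F y * F y ^ k)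
        (A * F x ^ k + F x * ((k : ℝ) • (F x ^ (k - 1) * A))) x := hasDerivAt_matmul hF ih
    have h2 : ∀ y, F y ^ (k+1) = F y * F y ^ k := fun y => pow_succ' (F y) k
    have h3 : A * F x ^ k + F x * ((k : ℝ) • (F x ^ (k - 1) * A))
        = ((k+1 : ℕ) : ℝ) • (F x ^ k * A) := by
      rcases Nat.eq_zero_or_pos k with hk | hk
      · subst hk; simp [hcp 0]
      · have : F x * ((k : ℝ) • (F x ^ (k - 1) * A)) = (k : ℝ) • (F x ^ k * A) := by
          rw [Matrix.mul_smul, ← Matrix.mul_assoc, ← pow_succ', Nat.sub_add_cancel hk]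
        rw [this, ← hcp k]
        push_cast
        rw [add_smul, one_smul]
        abel
    simp only [Nat.add_sub_cancel]
    rw [← h3]
    simp only [pow_succ']
    exact h1

lemma hasDerivAt_aeval_matrix {F : ℝ → Matrix (Fin d) (Fin d) ℝ}
    {A : Matrix (Fin d) (Fin d) ℝ} {x : ℝ}
    (hF : HasDerivAt F A x) (hcomm : F x * A = A * F x) (P : ℝ[X]) :
    HasDerivAt (fun y => aeval (F y) P) (aeval (F x) (derivative P) * A) x := by
  induction P using Polynomial.induction_on' with
  | add p q hp hq =>
    have := hp.add hq
    simp only [map_add, derivative_add, Matrix.add_mul]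
    exact this
  | monomial n a =>
    have h1 := (hasDerivAt_pow_matrix hF hcomm n).const_smul a
    have h2 : ∀ y, a • F y ^ n = aeval (F y) (monomial n a) := by
      intro y
      simp [aeval_monomial, Algebra.algebraMap_eq_smul_one, smul_one_mul]
    have h3 : a • ((n : ℝ) • (F x ^ (n - 1) * A))
        = aeval (F x) (derivative (monomial n a)) * A := by
      rw [derivative_monomial, aeval_monomial, Algebra.algebraMap_eq_smul_one, smul_one_mul,
        smul_mul_assoc, smul_smul]
    have h4 : (fun y => aeval (F y) (monomial n a)) = fun y => a • F y ^ n :=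
      funext fun y => (h2 y).symm
    rw [h4, ← h3]
    exact h1

lemma differentiableAt_det {F : ℝ → Matrix (Fin d) (Fin d) ℝ} {x : ℝ}
    (hF : ∀ i j, DifferentiableAt ℝ (fun y => F y i j) x) :
    DifferentiableAt ℝ (fun y => (F y).det) x := by
  have : (fun y => (F y).det)
      = fun y => ∑ σ : Equiv.Perm (Fin d), ((Equiv.Perm.sign σ : ℤ) : ℝ) * ∏ i, F y (σ i) i := by
    funext y
    rw [Matrix.det_apply]
    simp [Units.smul_def, zsmul_eq_mul]
  rw [this]
  apply DifferentiableAt.fun_sum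
  intro σ _
  exact (DifferentiableAt.fun_finsetProd (fun i _ => hF (σ i) i)).const_mul _




lemma eigenvalues_mem {A : Matrix (Fin d) (Fin d) ℝ} (hA : A.IsHermitian) {l L : ℝ}
    (hlower : (A - l • 1).PosSemidef) (hupper : (L • 1 - A).PosSemidef) (i : Fin d) :
    hA.eigenvalues i ∈ Set.Icc l L := by
  set v : Fin d → ℝ := ⇑(hA.eigenvectorBasis i) with hv
  have hmul : A *ᵥ v = hA.eigenvalues i • v := hA.mulVec_eigenvectorBasis i
  have hnorm : ‖hA.eigenvectorBasis i‖ = 1 := hA.eigenvectorBasis.orthonormal.1 i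
  have hdot : v ⬝ᵥ v = 1 := by
    have h1 : ‖hA.eigenvectorBasis i‖ ^ 2 = ∑ j, v j ^ 2 := by
      rw [EuclideanSpace.norm_eq, Real.sq_sqrt (by positivity)]
      refine Finset.sum_congr rfl fun j _ => ?_
      rw [Real.norm_eq_abs, sq_abs]
    rw [hnorm] at h1
    simp only [dotProduct, ← pow_two]
    rw [← h1]; norm_num
  constructor
  · have h0 := hlower.dotProduct_mulVec_nonneg v
    rw [star_trivial, Matrix.sub_mulVec, hmul, Matrix.smul_mulVec, Matrix.one_mulVec,
      dotProduct_sub, dotProduct_smul, dotProduct_smul, hdot] at h0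
    simp only [smul_eq_mul, mul_one] at h0
    linarith
  · have h0 := hupper.dotProduct_mulVec_nonneg v
    rw [star_trivial, Matrix.sub_mulVec, hmul, Matrix.smul_mulVec, Matrix.one_mulVec,
      dotProduct_sub, dotProduct_smul, dotProduct_smul, hdot] at h0
    simp only [smul_eq_mul, mul_one] at h0
    linarith


lemma cheb_scalar_bounds (l L : ℝ) (hl : 0 < l) (hlL : l < L) (t : ℕ) (ht : 1 ≤ t)
    (κ ξ : ℝ) (hκ : κ = l / L) (hξ : ξ = (1 - Real.sqrt κ) / (1 + Real.sqrt κ))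
    (P : ℝ[X])
    (hP : P = C (((Chebyshev.T ℝ (t : ℤ)).eval (-(L + l) / (L - l)))⁻¹) *
        (Chebyshev.T ℝ (t : ℤ)).comp (C (2 / (L - l)) * X - C ((L + l) / (L - l)))) :
    0 < ξ ∧ ξ < 1 ∧
    ∀ lam ∈ Set.Icc l L,
      |(derivative P).eval lam| ≤ (2/(ξ^t + ξ⁻¹^t)) * (2*(t:ℝ)^2/(L-l)) ∧
      |(P - X * derivative P).eval lam| ≤ (2/(ξ^t + ξ⁻¹^t)) * (2*(t:ℝ)^2/(1-κ) - 1) := by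
  have hL0 : 0 < L := hl.trans hlL
  have hLl : 0 < L - l := by linarith
  have hκ0 : 0 < κ := by rw [hκ]; positivity
  have hκ1 : κ < 1 := by rw [hκ, div_lt_one hL0]; exact hlL
  set s := Real.sqrt κ with hs
  have hs0 : 0 < s := Real.sqrt_pos.mpr hκ0
  have hs1 : s < 1 := by
    rw [hs, show (1:ℝ) = Real.sqrt 1 by simp]
    exact Real.sqrt_lt_sqrt hκ0.le hκ1
  have hs2 : s^2 = κ := Real.sq_sqrt hκ0.le
  have hξ0 : 0 < ξ := by rw [hξ]; apply div_pos <;> linarith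
  have hξ1 : ξ < 1 := by rw [hξ, div_lt_one (by linarith)]; linarith
  have hξne : ξ ≠ 0 := ne_of_gt hξ0
  have hκ1' : (1:ℝ) - κ ≠ 0 := by intro h; linarith
  have hc0 : (L+l)/(L-l) = (1+κ)/(1-κ) := by
    rw [hκ]
    have h2 : l/L < 1 := by rw [div_lt_one hL0]; exact hlL
    have h1 : (1:ℝ) - l/L ≠ 0 := by linarith
    field_simp
  have hxisum : (ξ + ξ⁻¹)/2 = (1+κ)/(1-κ) := by
    rw [hξ, ← hs2]
    have h2 : (1:ℝ) + s ≠ 0 := by linarith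
    have h3 : (1:ℝ) - s ≠ 0 := by intro h; linarith
    have h4 : (1:ℝ) - s^2 ≠ 0 := by intro h; nlinarith
    field_simp
    ring
  have hm0 : -(L+l)/(L-l) = ((-ξ) + (-ξ)⁻¹)/2 := by
    rw [neg_div, hc0, ← hxisum, inv_neg]
    ring
  set τ := (Chebyshev.T ℝ (t : ℤ)).eval (-(L + l) / (L - l)) with hτdef
  have hτ : τ = (-1:ℝ)^t * ((ξ^t + ξ⁻¹^t)/2) := by
    rw [hτdef, hm0, T_eval_half_add (-ξ) (by simpa using hξne) t, inv_neg, neg_pow, neg_pow]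
    ring
  have hsum0 : 0 < ξ^t + ξ⁻¹^t := by positivity
  have hτabs : |τ| = (ξ^t + ξ⁻¹^t)/2 := by
    rw [hτ, abs_mul, abs_pow, abs_neg, abs_one, one_pow, one_mul,
      abs_of_pos (by positivity)]
  have hτne : τ ≠ 0 := by
    intro h
    rw [h, abs_zero] at hτabs
    linarith
  have hρabs : |τ⁻¹| = 2/(ξ^t+ξ⁻¹^t) := by
    rw [abs_inv, hτabs, inv_div]
  refine ⟨hξ0, hξ1, fun lam hlam => ?_⟩
  set u := 2/(L-l) * lam - (L+l)/(L-l) with hudef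
  have hu : u ∈ Set.Icc (-1:ℝ) 1 := by
    have h1 : u = (2*lam - (L+l))/(L-l) := by rw [hudef]; ring
    constructor
    · rw [h1, le_div_iff₀ hLl]
      obtain ⟨ha, _⟩ := hlam
      linarith
    · rw [h1, div_le_one hLl]
      obtain ⟨_, hb⟩ := hlam
      linarith
  -- evaluation formulas
  have hPe : P.eval lam = τ⁻¹ * (Chebyshev.T ℝ (t:ℤ)).eval u := by
    rw [hP]
    simp [eval_comp, hudef]
  have hderiv : derivative P = C τ⁻¹ * (C (2/(L-l)) *
      ((t:ℤ) * Chebyshev.U ℝ ((t:ℤ)-1)).comp (C (2 / (L - l)) * X - C ((L + l) / (L - l)))) := by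
    rw [hP, derivative_C_mul, derivative_comp, Chebyshev.T_derivative_eq_U]
    have : derivative (C (2 / (L - l)) * X - C ((L + l) / (L - l))) = C (2/(L-l)) := by
      simp
    rw [this]
  set bU := (Chebyshev.U ℝ ((t:ℤ)-1)).eval u with hbUdef
  have hdPe : (derivative P).eval lam = τ⁻¹ * (2/(L-l) * ((t:ℝ) * bU)) := by
    rw [hderiv]
    simp [eval_comp, hudef, hbUdef]
  have hbU : |bU| ≤ (t:ℝ) := by
    have h := U_eval_abs_le (t-1) hu
    have h1 : ((t-1:ℕ):ℤ) = (t:ℤ)-1 := by omega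
    have h2 : ((t-1:ℕ):ℝ) + 1 = (t:ℝ) := by
      have := Nat.cast_sub (R := ℝ) ht
      rw [this]; ring
    rw [h1, h2] at h
    exact h
  have ht1 : (1:ℝ) ≤ (t:ℝ) := by exact_mod_cast ht
  constructor
  · rw [hdPe, abs_mul, abs_mul, abs_mul, hρabs]
    have e1 : |2/(L-l)| = 2/(L-l) := abs_of_pos (by positivity)
    have e2 : |(t:ℝ)| = (t:ℝ) := abs_of_nonneg (by positivity)
    rw [e1, e2]
    calc 2/(ξ^t+ξ⁻¹^t) * (2/(L-l) * ((t:ℝ) * |bU|))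
        ≤ 2/(ξ^t+ξ⁻¹^t) * (2/(L-l) * ((t:ℝ) * (t:ℝ))) := by
          have hb1 : (0:ℝ) ≤ 2/(ξ^t+ξ⁻¹^t) := by positivity
          have hb2 : (0:ℝ) ≤ 2/(L-l) := by positivity
          have hb3 : (0:ℝ) ≤ (t:ℝ) := by positivity
          gcongr
      _ = 2/(ξ^t + ξ⁻¹^t) * (2*(t:ℝ)^2/(L-l)) := by ring
  · -- second bound
    set aU := (Chebyshev.U ℝ (t:ℤ)).eval u with haUdef
    set cU := (Chebyshev.U ℝ ((t:ℤ)-2)).eval u with hcUdef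
    have hTu : (Chebyshev.T ℝ (t:ℤ)).eval u = aU - u * bU := by
      have := Chebyshev.T_eq_U_sub_X_mul_U ℝ (t:ℤ)
      have h2 := congrArg (eval u) this
      simpa [haUdef, hbUdef] using h2
    have hrec : aU = 2*u*bU - cU := by
      have h0 := Chebyshev.U_add_two ℝ ((t:ℤ)-2)
      have h1 : (t:ℤ)-2+2 = (t:ℤ) := by ring
      have h2 : (t:ℤ)-2+1 = (t:ℤ)-1 := by ring
      rw [h1, h2] at h0
      have h3 := congrArg (eval u) h0
      simpa [haUdef, hbUdef, hcUdef] using h3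
    have hcU : |cU| ≤ (t:ℝ) - 1 := by
      rcases Nat.lt_or_ge t 2 with h2 | h2
      · have : t = 1 := by omega
        subst this
        have : ((1:ℕ):ℤ) - 2 = -1 := by norm_num
        rw [hcUdef, this, Chebyshev.U_neg_one]
        simp
      · have h := U_eval_abs_le (t-2) hu
        have h1 : ((t-2:ℕ):ℤ) = (t:ℤ)-2 := by omega
        have h2' : ((t-2:ℕ):ℝ) + 1 = (t:ℝ) - 1 := by
          rw [Nat.cast_sub h2]
          push_cast
          ring
        rw [h1, h2'] at h
        exact h
    have haU : |aU| ≤ (t:ℝ) + 1 := U_eval_abs_le t hu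
    have hlam_a : 2/(L-l) * lam = u + (L+l)/(L-l) := by rw [hudef]; ring
    have hev : (P - X * derivative P).eval lam
        = τ⁻¹ * ((1-(t:ℝ))/2 * aU + (-(((t:ℝ)+1)/2 * cU)) + (-((L+l)/(L-l) * ((t:ℝ) * bU)))) := by
      rw [eval_sub, eval_mul, eval_X, hPe, hdPe, hTu]
      have h5 : lam * (τ⁻¹ * (2 / (L - l) * (↑t * bU))) = τ⁻¹ * ((u + (L+l)/(L-l)) * ((t:ℝ) * bU)) := by
        rw [← hlam_a]; ring
      rw [h5]
      have h6 : aU - u * bU - (u + (L+l)/(L-l)) * ((t:ℝ) * bU)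
          = (1-(t:ℝ))/2 * aU + (-(((t:ℝ)+1)/2 * cU)) + (-((L+l)/(L-l) * ((t:ℝ) * bU))) := by
        linear_combination (((t:ℝ)+1)/2) * hrec
      rw [← mul_sub, h6]
    rw [hev, abs_mul, hρabs]
    have hc0pos : 0 < (L+l)/(L-l) := by positivity
    have habs3 : |(1-(t:ℝ))/2 * aU + (-(((t:ℝ)+1)/2 * cU)) + (-((L+l)/(L-l) * ((t:ℝ) * bU)))|
        ≤ ((t:ℝ)-1)/2 * ((t:ℝ)+1) + ((t:ℝ)+1)/2 * ((t:ℝ)-1) + (L+l)/(L-l) * ((t:ℝ)*(t:ℝ)) := by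
      have h7 := abs_add_three ((1-(t:ℝ))/2 * aU) (-(((t:ℝ)+1)/2 * cU)) (-((L+l)/(L-l) * ((t:ℝ) * bU)))
      have e1 : |(1-(t:ℝ))/2 * aU| ≤ ((t:ℝ)-1)/2 * ((t:ℝ)+1) := by
        rw [abs_mul, abs_div, abs_of_pos (by norm_num : (0:ℝ) < 2)]
        have : |1-(t:ℝ)| = (t:ℝ)-1 := by rw [abs_sub_comm]; exact abs_of_nonneg (by linarith)
        rw [this]
        gcongr
      have e2 : |(-(((t:ℝ)+1)/2 * cU))| ≤ ((t:ℝ)+1)/2 * ((t:ℝ)-1) := by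
        rw [abs_neg, abs_mul, abs_div, abs_of_pos (by norm_num : (0:ℝ) < 2),
          abs_of_nonneg (by linarith : (0:ℝ) ≤ (t:ℝ)+1)]
        gcongr
      have e3 : |(-((L+l)/(L-l) * ((t:ℝ) * bU)))| ≤ (L+l)/(L-l) * ((t:ℝ)*(t:ℝ)) := by
        rw [abs_neg, abs_mul, abs_mul, abs_of_pos hc0pos,
          abs_of_nonneg (by positivity : (0:ℝ) ≤ (t:ℝ))]
        gcongr
      linarith
    have hfin : ((t:ℝ)-1)/2 * ((t:ℝ)+1) + ((t:ℝ)+1)/2 * ((t:ℝ)-1) + (L+l)/(L-l) * ((t:ℝ)*(t:ℝ))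
        = 2*(t:ℝ)^2/(1-κ) - 1 := by
      rw [hc0]
      field_simp
      ring
    calc 2/(ξ^t+ξ⁻¹^t) * |(1-(t:ℝ))/2 * aU + (-(((t:ℝ)+1)/2 * cU)) + (-((L+l)/(L-l) * ((t:ℝ) * bU)))|
        ≤ 2/(ξ^t+ξ⁻¹^t) * (((t:ℝ)-1)/2 * ((t:ℝ)+1) + ((t:ℝ)+1)/2 * ((t:ℝ)-1) + (L+l)/(L-l) * ((t:ℝ)*(t:ℝ))) := by
          have hb1 : (0:ℝ) ≤ 2/(ξ^t+ξ⁻¹^t) := by positivity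
          gcongr
      _ = 2/(ξ^t+ξ⁻¹^t) * (2*(t:ℝ)^2/(1-κ) - 1) := by rw [hfin]


end JRC
/-- Jacobian suboptimality rate for the Chebyshev method (Theorem 3.5). -/
theorem jacobian_rate_chebyshev {d : ℕ} (hd : 1 ≤ d) (θ : ℝ)
    (H : ℝ → Matrix (Fin d) (Fin d) ℝ) (b x₀ : ℝ → (Fin d → ℝ))
    (hH : DifferentiableAt ℝ H θ) (hb : DifferentiableAt ℝ b θ)
    (hx₀ : DifferentiableAt ℝ x₀ θ)
    (ℓ L : ℝ) (hℓ : 0 < ℓ) (hℓL : ℓ < L)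
    (hsym : (H θ).IsSymm)
    (hlower : (H θ - ℓ • 1).PosSemidef) (hupper : (L • 1 - H θ).PosSemidef)
    (hcomm : H θ * deriv H θ = deriv H θ * H θ)
    (t : ℕ) (ht : 1 ≤ t)
    (P : Polynomial ℝ)
    (hP : P = Polynomial.C (((Polynomial.Chebyshev.T ℝ (t : ℤ)).eval (-(L + ℓ) / (L - ℓ)))⁻¹) *
        (Polynomial.Chebyshev.T ℝ (t : ℤ)).comp
          (Polynomial.C (2 / (L - ℓ)) * Polynomial.X - Polynomial.C ((L + ℓ) / (L - ℓ))))
    (xstar : ℝ → (Fin d → ℝ))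
    (hxstar : ∀ θ' : ℝ, xstar θ' = -((H θ')⁻¹.mulVec (b θ')))
    (xt : ℝ → (Fin d → ℝ))
    (hxt : ∀ θ' : ℝ, xt θ' =
      xstar θ' + ((Polynomial.aeval (H θ')) P).mulVec (x₀ θ' - xstar θ'))
    (G : ℝ)
    (hG : G = euclNorm ((deriv H θ).mulVec (x₀ θ) + (H θ).mulVec (deriv x₀ θ) + deriv b θ))
    (κ ξ : ℝ) (hκ : κ = ℓ / L) (hξ : ξ = (1 - Real.sqrt κ) / (1 + Real.sqrt κ)) :
    euclNorm (deriv xt θ - deriv xstar θ) ≤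
      (2 / (ξ ^ t + ξ ^ (-(t : ℤ)))) *
        (|2 * (t : ℝ) ^ 2 / (1 - κ) - 1| * euclNorm (deriv x₀ θ - deriv xstar θ)
          + (2 * (t : ℝ) ^ 2 / (L - ℓ)) * G) := by
  classical
  have hL0 : 0 < L := hℓ.trans hℓL
  have hκ1 : κ < 1 := by rw [hκ, div_lt_one hL0]; exact hℓL
  have hκ0 : 0 < κ := by rw [hκ]; positivity
  have ht1 : (1:ℝ) ≤ (t:ℝ) := by exact_mod_cast ht
  set A := H θ with hA_def
  set A' := deriv H θ with hA'_def
  have hH' : HasDerivAt H A' θ := hH.hasDerivAt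
  have hA : A.IsHermitian := by
    rw [Matrix.IsHermitian, Matrix.conjTranspose_eq_transpose_of_trivial]
    exact hsym
  have hev : ∀ i, hA.eigenvalues i ∈ Set.Icc ℓ L := JRC.eigenvalues_mem hA hlower hupper
  have hdet0 : A.det ≠ 0 := by
    rw [hA.det_eq_prod_eigenvalues]
    have hpos : ∀ i ∈ Finset.univ, (0:ℝ) < hA.eigenvalues i :=
      fun i _ => lt_of_lt_of_le hℓ (hev i).1
    push_cast
    exact ne_of_gt (Finset.prod_pos hpos)
  have hHij : ∀ i j, DifferentiableAt ℝ (fun y => H y i j) θ := fun i j =>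
    ((JRC.hasDerivAt_matrix.mp hH') i j).differentiableAt
  have hdetH : DifferentiableAt ℝ (fun y => (H y).det) θ := JRC.differentiableAt_det hHij
  have hadj : ∀ i j, DifferentiableAt ℝ (fun y => (H y).adjugate i j) θ := by
    intro i j
    have heq : (fun y => (H y).adjugate i j)
        = fun y => ((H y).updateRow j (Pi.single i 1)).det := by
      funext y; rw [Matrix.adjugate_apply]
    rw [heq]
    apply JRC.differentiableAt_det
    intro k l
    have heq2 : (fun y => ((H y).updateRow j (Pi.single i 1)) k l)
        = fun y => if k = j then (Pi.single i 1 : Fin d → ℝ) l else H y k l := by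
      funext y; rw [Matrix.updateRow_apply]
    rw [heq2]
    by_cases hk : k = j
    · simp only [hk, if_true]; exact differentiableAt_const _
    · simp only [hk, if_false]; exact hHij k l
  have hinvij : ∀ i j, DifferentiableAt ℝ (fun y => (H y)⁻¹ i j) θ := by
    intro i j
    have heq : (fun y => (H y)⁻¹ i j) = fun y => ((H y).det)⁻¹ * (H y).adjugate i j := by
      funext y
      rw [Matrix.inv_def, Ring.inverse_eq_inv', Matrix.smul_apply, smul_eq_mul]
    rw [heq]
    exact (hdetH.inv hdet0).mul (hadj i j)
  have hbi : ∀ i, DifferentiableAt ℝ (fun y => b y i) θ := by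
    intro i
    exact ((hasDerivAt_pi.mp hb.hasDerivAt) i).differentiableAt
  have hxstar_diff : DifferentiableAt ℝ xstar θ := by
    have heq : xstar = fun y => -((H y)⁻¹ *ᵥ b y) := funext hxstar
    rw [heq, differentiableAt_pi]
    intro i
    have heq2 : (fun y => (-((H y)⁻¹ *ᵥ b y)) i) = fun y => -(∑ k, (H y)⁻¹ i k * b y k) := by
      funext y; simp [Matrix.mulVec, dotProduct]
    rw [heq2]
    exact (DifferentiableAt.fun_sum fun k _ => (hinvij i k).mul (hbi k)).neg
  set xs' := deriv xstar θ with hxs'_def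
  have hds : HasDerivAt xstar xs' θ := hxstar_diff.hasDerivAt
  have hb' : HasDerivAt b (deriv b θ) θ := hb.hasDerivAt
  have hx₀' : HasDerivAt x₀ (deriv x₀ θ) θ := hx₀.hasDerivAt
  have hev_ne : ∀ᶠ y in nhds θ, (H y).det ≠ 0 := hdetH.continuousAt.eventually_ne hdet0
  have hevid : (fun y => (H y) *ᵥ (xstar y)) =ᶠ[nhds θ] (fun y => -(b y)) := by
    filter_upwards [hev_ne] with y hy
    rw [hxstar y, Matrix.mulVec_neg, Matrix.mulVec_mulVec,
      Matrix.mul_nonsing_inv _ (isUnit_iff_ne_zero.mpr hy), Matrix.one_mulVec]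
  have hld : HasDerivAt (fun y => (H y) *ᵥ (xstar y)) (A' *ᵥ xstar θ + A *ᵥ xs') θ :=
    JRC.hasDerivAt_mulVec hH' hds
  have hld' : HasDerivAt (fun y => -(b y)) (A' *ᵥ xstar θ + A *ᵥ xs') θ :=
    hld.congr_of_eventuallyEq hevid.symm
  have hkey : A' *ᵥ xstar θ + A *ᵥ xs' = -(deriv b θ) := hld'.unique hb'.neg
  -- derivative of xt
  have haevalP : HasDerivAt (fun y => aeval (H y) P) (aeval A (derivative P) * A') θ :=
    JRC.hasDerivAt_aeval_matrix hH' hcomm P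
  have hdiffv : HasDerivAt (fun y => x₀ y - xstar y) (deriv x₀ θ - xs') θ := hx₀'.sub hds
  have hxtD : HasDerivAt xt (xs' + ((aeval A (derivative P) * A') *ᵥ (x₀ θ - xstar θ)
      + (aeval A P) *ᵥ (deriv x₀ θ - xs'))) θ := by
    have heq : xt = fun y => xstar y + (aeval (H y) P) *ᵥ (x₀ y - xstar y) := funext hxt
    rw [heq]
    exact hds.add (JRC.hasDerivAt_mulVec haevalP hdiffv)
  set E := deriv x₀ θ - xs' with hE_def
  set w := A' *ᵥ x₀ θ + A *ᵥ deriv x₀ θ + deriv b θ with hw_def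
  have hQA : aeval A (derivative P) * A = A * aeval A (derivative P) := by
    have h1 : aeval A (derivative P) * A = aeval A (derivative P * X) := by
      rw [_root_.map_mul, aeval_X]
    have h2 : A * aeval A (derivative P) = aeval A (X * derivative P) := by
      rw [_root_.map_mul, aeval_X]
    rw [h1, h2, mul_comm (derivative P) X]
  have hLHSvec : deriv xt θ - deriv xstar θ
      = (aeval A (derivative P)) *ᵥ w + (aeval A (P - X * derivative P)) *ᵥ E := by
    rw [hxtD.deriv, ← hxs'_def]
    have hb2 : deriv b θ = -(A' *ᵥ xstar θ + A *ᵥ xs') := by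
      rw [hkey, neg_neg]
    rw [hw_def, hb2, hE_def]
    simp only [map_sub, _root_.map_mul, aeval_X, Matrix.sub_mulVec, Matrix.add_mulVec,
      Matrix.mulVec_add, Matrix.mulVec_sub, Matrix.mulVec_neg, ← Matrix.mulVec_mulVec]
    have hswap : ∀ v : Fin d → ℝ,
        (aeval A (derivative P)) *ᵥ (A *ᵥ v) = A *ᵥ ((aeval A (derivative P)) *ᵥ v) := by
      intro v
      rw [Matrix.mulVec_mulVec, Matrix.mulVec_mulVec, hQA]
    simp only [hswap]
    abel
  rw [hLHSvec]
  obtain ⟨hξ0, hξ1, hbound⟩ := JRC.cheb_scalar_bounds ℓ L hℓ hℓL t ht κ ξ hκ hξ P hP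
  set ρ := 2/(ξ^t + ξ⁻¹^t) with hρ_def
  have b1 : euclNorm ((aeval A (derivative P)) *ᵥ w) ≤ ρ * (2*(t:ℝ)^2/(L-ℓ)) * euclNorm w :=
    JRC.opBound hd hA _ (fun i => (hbound _ (hev i)).1) w
  have b2 : euclNorm ((aeval A (P - X * derivative P)) *ᵥ E)
      ≤ ρ * (2*(t:ℝ)^2/(1-κ) - 1) * euclNorm E :=
    JRC.opBound hd hA _ (fun i => (hbound _ (hev i)).2) E
  have htri := JRC.euclNorm_add_le ((aeval A (derivative P)) *ᵥ w)
    ((aeval A (P - X * derivative P)) *ᵥ E)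
  have hwG : euclNorm w = G := by rw [hG]
  have habs : |2 * (t:ℝ)^2/(1-κ) - 1| = 2*(t:ℝ)^2/(1-κ) - 1 := by
    apply abs_of_nonneg
    have h1k : 0 < 1 - κ := by linarith
    rw [sub_nonneg, le_div_iff₀ h1k]
    nlinarith
  have hzpow : ξ ^ (-(t:ℤ)) = ξ⁻¹^t := by
    rw [_root_.zpow_neg, zpow_natCast, inv_pow]
  rw [hzpow, habs, ← hρ_def]
  have hwnn : 0 ≤ euclNorm E := JRC.euclNorm_nonneg E
  calc euclNorm ((aeval A (derivative P)) *ᵥ w + (aeval A (P - X * derivative P)) *ᵥ E)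
      ≤ euclNorm ((aeval A (derivative P)) *ᵥ w)
        + euclNorm ((aeval A (P - X * derivative P)) *ᵥ E) := htri
    _ ≤ ρ * (2*(t:ℝ)^2/(L-ℓ)) * euclNorm w + ρ * (2*(t:ℝ)^2/(1-κ) - 1) * euclNorm E := by
        linarith
    _ = ρ * ((2*(t:ℝ)^2/(1-κ) - 1) * euclNorm E + 2*(t:ℝ)^2/(L-ℓ) * euclNorm w) := by ring
    _ = ρ * ((2*(t:ℝ)^2/(1-κ) - 1) * euclNorm E + 2*(t:ℝ)^2/(L-ℓ) * G) := by rw [hwG]
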